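/- For a lossless network (bus admittance matrix Y purely imaginary, with Im(Y) a connected weighted graph Laplacian), the set of achievable real power injection vectors p = Re(diag(v v^H Y^H)) over all complex voltage vectors v ∈ ℂ^n is exactly the hyperplane {p ∈ ℝ^n : ∑_i p_i = 0}. -/

import Mathlib

open Matrix

/-- The real power injection vector `p = Re(diag(v v^H Y^H))` of a voltage vector
`v`, whose `i`-th entry is `Re(v_i ⬝ conj((Y v)_i))`. -/
noncomputable def powerInjection {n : ℕ} (Y : Matrix (Fin n) (Fin n) ℂ)
    (v : Fin n → ℂ) : Fin n → ℝ :=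
  fun i => (v i * (starRingEnd ℂ) ((Y *ᵥ v) i)).re

namespace LosslessAux

open Polynomial

variable {n : ℕ}

noncomputable def Mc (B : Matrix (Fin n) (Fin n) ℝ) (c x : Fin n → ℝ) : Fin n → ℝ :=
  fun i => c i * (B *ᵥ x) i - x i * (B *ᵥ c) i

lemma sum_Mc (B : Matrix (Fin n) (Fin n) ℝ) (hsym : B.IsSymm) (c x : Fin n → ℝ) :
    ∑ i, Mc B c x i = 0 := by
  have h1 : ∀ z w : Fin n → ℝ, ∑ i, z i * (B *ᵥ w) i
      = ∑ i, ∑ k, B i k * z i * w k := by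
    intro z w
    refine Finset.sum_congr rfl fun i _ => ?_
    simp [Matrix.mulVec, dotProduct, Finset.mul_sum]
    ring_nf
  simp only [Mc, Finset.sum_sub_distrib, h1]
  rw [Finset.sum_comm (f := fun i k => B i k * x i * c k)]
  rw [sub_eq_zero]
  refine Finset.sum_congr rfl fun i _ => Finset.sum_congr rfl fun k _ => ?_
  rw [hsym.apply i k]
  ring

def Good (B : Matrix (Fin n) (Fin n) ℝ) (A : Finset (Fin n)) : Prop :=
  ∃ c : Fin n → ℝ,
    (∀ i, i ∉ A → c i = 0) ∧
    (∑ i, c i ≠ 0) ∧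
    (∀ x : Fin n → ℝ, (∀ i, i ∉ A → x i = 0) →
      (∀ i ∈ A, Mc B c x i = 0) → ∃ t : ℝ, x = t • c) ∧
    (∀ m, m ∉ A → (∃ i ∈ A, B i m ≠ 0) → (B *ᵥ c) m ≠ 0)

lemma mulVec_point (B : Matrix (Fin n) (Fin n) ℝ) (x c : Fin n → ℝ) (s : ℝ) (i : Fin n) :
    (B *ᵥ fun j => x j - s * c j) i = (B *ᵥ x) i - s * (B *ᵥ c) i := by
  simp only [Matrix.mulVec, dotProduct, mul_sub, Finset.mul_sum,
    Finset.sum_sub_distrib]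
  congr 1
  exact Finset.sum_congr rfl fun k _ => by ring

lemma good_insert (B : Matrix (Fin n) (Fin n) ℝ) (hsym : B.IsSymm)
    (A : Finset (Fin n)) (hA : Good B A) (ℓ : Fin n) (hℓ : ℓ ∉ A)
    (hedge : ∃ i ∈ A, B i ℓ ≠ 0) :
    Good B (insert ℓ A) := by
  classical
  obtain ⟨c, hsupp, hsum, hker, hfut⟩ := hA
  have hcℓ : c ℓ = 0 := hsupp ℓ hℓ
  have hβc : (B *ᵥ c) ℓ ≠ 0 := hfut ℓ hℓ hedge
  -- the polynomial matrix
  set q : Polynomial ℝ := (Matrix.det (fun i k =>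
    if i ∈ A then
      (if k ∈ A then
        C (c i * B i k + c i * B k ℓ)
          + (if k = i then -(C ((B *ᵥ c) i) + X * C (B i ℓ)) else 0)
      else 0)
    else (if k = i then 1 else 0) : Matrix (Fin n) (Fin n) (Polynomial ℝ))) with hq
  set Np : Matrix (Fin n) (Fin n) (Polynomial ℝ) := (fun i k =>
    if i ∈ A then
      (if k ∈ A then
        C (c i * B i k + c i * B k ℓ)
          + (if k = i then -(C ((B *ᵥ c) i) + X * C (B i ℓ)) else 0)
      else 0)
    else (if k = i then 1 else 0)) with hNp
  have hdet : ∀ γ : ℝ, (Np.map (evalRingHom γ)).det = q.eval γ := by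
    intro γ
    have h := RingHom.map_det (evalRingHom γ) Np
    rw [RingHom.mapMatrix_apply] at h
    rw [hq]
    rw [← h]
    simp [Polynomial.coe_evalRingHom]
  -- row computation
  have rowA : ∀ (γ : ℝ) (y : Fin n → ℝ), (∀ i, i ∉ A → y i = 0) → ∀ i ∈ A,
      ((Np.map (evalRingHom γ)) *ᵥ y) i
        = Mc B c y i - γ * B i ℓ * y i + c i * (B *ᵥ y) ℓ := by
    intro γ y hy i hi
    have step : ∀ k, (Np.map (evalRingHom γ)) i k * y k
        = (c i * B i k * y k + c i * (B k ℓ * y k))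
          - (if k = i then ((B *ᵥ c) i + γ * B i ℓ) * y k else 0) := by
      intro k
      by_cases hk : k ∈ A
      · by_cases hki : k = i
        · rw [Matrix.map_apply]; simp [hNp, hi, hk, hki]; ring
        · rw [Matrix.map_apply]; simp [hNp, hi, hk, hki]; ring
      · have hyk : y k = 0 := hy k hk
        have hki : ¬ (k = i) := fun h => hk (h ▸ hi)
        simp [Matrix.map_apply, hNp, hi, hk, hki, hyk]
    have : ((Np.map (evalRingHom γ)) *ᵥ y) i = ∑ k, ((c i * B i k * y k + c i * (B k ℓ * y k))
          - (if k = i then ((B *ᵥ c) i + γ * B i ℓ) * y k else 0)) := by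
      simp only [Matrix.mulVec, dotProduct]
      exact Finset.sum_congr rfl fun k _ => step k
    rw [this]
    rw [Finset.sum_sub_distrib, Finset.sum_add_distrib]
    rw [Finset.sum_ite_eq' Finset.univ i (fun k => ((B *ᵥ c) i + γ * B i ℓ) * y k)]
    have e1 : ∑ k, c i * B i k * y k = c i * (B *ᵥ y) i := by
      simp [Matrix.mulVec, dotProduct, Finset.mul_sum, mul_assoc]
    have e2 : ∑ k, c i * (B k ℓ * y k) = c i * (B *ᵥ y) ℓ := by
      rw [← Finset.mul_sum]
      congr 1
      simp only [Matrix.mulVec, dotProduct]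
      exact Finset.sum_congr rfl fun k _ => by rw [hsym.apply ℓ k]
    rw [e1, e2]
    simp only [Finset.mem_univ, if_true, Mc]
    ring
  have rowOut : ∀ (γ : ℝ) (y : Fin n → ℝ) (i : Fin n), i ∉ A →
      ((Np.map (evalRingHom γ)) *ᵥ y) i = y i := by
    intro γ y i hi
    simp only [Matrix.mulVec, dotProduct, Matrix.map_apply, hNp, hi, if_false]
    simp [Matrix.map, hi, apply_ite (eval γ)]
  -- injectivity at γ = 0
  have hN0 : ∀ y : Fin n → ℝ, (Np.map (evalRingHom 0)) *ᵥ y = 0 → y = 0 := by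
    intro y h0
    have hysupp : ∀ i, i ∉ A → y i = 0 := by
      intro i hi
      have := congrFun h0 i
      rwa [rowOut 0 y i hi] at this
    have hrowsA : ∀ i ∈ A, Mc B c y i + c i * (B *ᵥ y) ℓ = 0 := by
      intro i hi
      have := congrFun h0 i
      rw [rowA 0 y hysupp i hi] at this
      simpa using this
    have hall : ∀ i, Mc B c y i + c i * (B *ᵥ y) ℓ = 0 := by
      intro i
      by_cases hi : i ∈ A
      · exact hrowsA i hi
      · simp [Mc, hsupp i hi, hysupp i hi]
    have hsum0 : (∑ i, c i) * (B *ᵥ y) ℓ = 0 := by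
      have := Finset.sum_congr rfl (fun i (_ : i ∈ Finset.univ) => hall i)
      rw [Finset.sum_add_distrib, Finset.sum_const_zero] at this
      rw [sum_Mc B hsym c y, zero_add, ← Finset.sum_mul] at this
      linarith [this]
    have hByl : (B *ᵥ y) ℓ = 0 := by
      rcases mul_eq_zero.mp hsum0 with h | h
      · exact absurd h hsum
      · exact h
    have hMc0 : ∀ i ∈ A, Mc B c y i = 0 := by
      intro i hi
      have := hrowsA i hi
      rw [hByl] at this
      linarith [this]
    obtain ⟨t, ht⟩ := hker y hysupp hMc0
    have : (B *ᵥ y) ℓ = t * (B *ᵥ c) ℓ := by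
      rw [ht]
      simp [Matrix.mulVec, dotProduct, Finset.mul_sum]
      exact Finset.sum_congr rfl fun k _ => by ring
    rw [hByl] at this
    have ht0 : t = 0 := by
      rcases mul_eq_zero.mp this.symm with h | h
      · exact h
      · exact absurd h hβc
    rw [ht, ht0]
    simp
  -- q ≠ 0
  have hq0 : q.eval 0 ≠ 0 := by
    rw [← hdet 0]
    intro hdet0
    obtain ⟨y, hy0, hyker⟩ := Matrix.exists_mulVec_eq_zero_iff.mpr hdet0
    exact hy0 (hN0 y hyker)
  have hqne : q ≠ 0 := fun h => hq0 (by rw [h]; simp)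
  -- bad set of γ
  set Bad : Set ℝ := {γ | q.eval γ = 0} ∪ ({0, -∑ i, c i} : Set ℝ)
      ∪ ⋃ m ∈ ((Finset.univ \ insert ℓ A : Finset (Fin n)) : Set (Fin n)),
          {γ : ℝ | B m ℓ ≠ 0 ∧ (B *ᵥ c) m + γ * B m ℓ = 0} with hBadDef
  have hBadFin : Bad.Finite := by
    apply Set.Finite.union
    apply Set.Finite.union
    · exact Polynomial.finite_setOf_isRoot hqne
    · exact (Set.finite_singleton _).insert _
    · apply Set.Finite.biUnion ((Finset.univ \ insert ℓ A : Finset (Fin n)).finite_toSet)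
      intro m _
      apply Set.Finite.subset (Set.finite_singleton (-((B *ᵥ c) m) / (B m ℓ)))
      rintro γ ⟨hne, heq⟩
      have : γ = -((B *ᵥ c) m) / (B m ℓ) := by
        field_simp
        linarith [heq]
      simp [this]
  obtain ⟨γ, hγ⟩ := hBadFin.infinite_compl.nonempty
  rw [Set.mem_compl_iff] at hγ
  have hqγ : q.eval γ ≠ 0 := fun h => hγ (Set.mem_union_left _ (Set.mem_union_left _ h))
  have hγ0 : γ ≠ 0 := fun h => hγ (Set.mem_union_left _ (Set.mem_union_right _ (by simp [h])))
  have hγsum : γ ≠ -∑ i, c i := fun h => hγ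
    (Set.mem_union_left _ (Set.mem_union_right _ (by simp [h])))
  have hγm : ∀ m, m ∉ insert ℓ A → B m ℓ ≠ 0 → (B *ᵥ c) m + γ * B m ℓ ≠ 0 := by
    intro m hm hne heq
    apply hγ
    apply Set.mem_union_right
    exact Set.mem_biUnion (Finset.mem_coe.mpr
      (Finset.mem_sdiff.mpr ⟨Finset.mem_univ m, hm⟩)) ⟨hne, heq⟩
  -- the new vector
  set c' : Fin n → ℝ := fun i => c i + γ * (if i = ℓ then 1 else 0) with hc'
  have hc'ℓ : c' ℓ = γ := by simp [hc', hcℓ]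
  have hc'ne : ∀ i, i ≠ ℓ → c' i = c i := by intro i hi; simp [hc', hi]
  have hBc' : ∀ m, (B *ᵥ c') m = (B *ᵥ c) m + γ * B m ℓ := by
    intro m
    have step : ∀ k, B m k * c' k = B m k * c k + (if k = ℓ then γ * B m ℓ else 0) := by
      intro k
      by_cases h : k = ℓ
      · subst h; simp [hc']; ring
      · simp [hc', h]
    simp only [Matrix.mulVec, dotProduct]
    rw [Finset.sum_congr rfl fun k _ => step k, Finset.sum_add_distrib,
      Finset.sum_ite_eq' Finset.univ ℓ (fun _ => γ * B m ℓ)]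
    simp
  have hsupp' : ∀ i, i ∉ insert ℓ A → c' i = 0 := by
    intro i hi
    have hiℓ : i ≠ ℓ := fun h => hi (h ▸ Finset.mem_insert_self ℓ A)
    have hiA : i ∉ A := fun h => hi (Finset.mem_insert_of_mem h)
    rw [hc'ne i hiℓ]; exact hsupp i hiA
  have hsum' : ∑ i, c' i = (∑ i, c i) + γ := by
    simp only [hc', Finset.sum_add_distrib, ← Finset.mul_sum,
      Finset.sum_ite_eq' Finset.univ ℓ (fun _ => (1:ℝ))]
    simp
  refine ⟨c', hsupp', ?_, ?_, ?_⟩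
  · rw [hsum']
    intro h
    exact hγsum (by linarith)
  · -- kernel property
    intro x hxsupp hMx
    set ξ : ℝ := x ℓ with hξ
    set y : Fin n → ℝ := fun i => x i - (ξ/γ) * c' i with hy
    have hyℓ : y ℓ = 0 := by
      simp only [hy, hc'ℓ, hξ]
      field_simp
      ring
    have hysupp : ∀ i, i ∉ A → y i = 0 := by
      intro i hi
      by_cases hiℓ : i = ℓ
      · subst hiℓ; exact hyℓ
      · have : i ∉ insert ℓ A := by simp [hiℓ, hi]
        simp only [hy]
        rw [hxsupp i this, hc'ne i hiℓ, hsupp i hi]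
        ring
    have hBxy : ∀ i, (B *ᵥ x) i = (B *ᵥ y) i + (ξ/γ) * (B *ᵥ c') i := by
      intro i
      have := mulVec_point B x c' (ξ/γ) i
      have hyy : (B *ᵥ y) i = (B *ᵥ fun j => x j - ξ/γ * c' j) i := rfl
      rw [hyy, this]
      ring
    have hMxy : ∀ i, Mc B c' x i = Mc B c' y i := by
      intro i
      simp only [Mc]
      rw [hBxy i]
      have : y i = x i - (ξ/γ) * c' i := rfl
      rw [this]
      ring
    have hByℓ : (B *ᵥ y) ℓ = 0 := by
      have h0 := hMx ℓ (Finset.mem_insert_self ℓ A)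
      rw [hMxy ℓ] at h0
      simp only [Mc, hyℓ, hc'ℓ] at h0
      have : γ * (B *ᵥ y) ℓ = 0 := by linarith
      rcases mul_eq_zero.mp this with h | h
      · exact absurd h hγ0
      · exact h
    have hMy : ∀ i ∈ A, Mc B c y i - γ * B i ℓ * y i = 0 := by
      intro i hi
      have hiℓ : i ≠ ℓ := fun h => hℓ (h ▸ hi)
      have h0 := hMx i (Finset.mem_insert_of_mem hi)
      rw [hMxy i] at h0
      simp only [Mc] at h0 ⊢
      rw [hc'ne i hiℓ, hBc' i] at h0
      linarith
    have hNy : (Np.map (evalRingHom γ)) *ᵥ y = 0 := by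
      funext i
      by_cases hi : i ∈ A
      · rw [Pi.zero_apply, rowA γ y hysupp i hi]
        have := hMy i hi
        rw [hByℓ]
        linarith
      · rw [Pi.zero_apply, rowOut γ y i hi]
        exact hysupp i hi
    have hdetγ : (Np.map (evalRingHom γ)).det ≠ 0 := by rw [hdet γ]; exact hqγ
    have hy0 : y = 0 := by
      by_contra hyne
      exact hdetγ (Matrix.exists_mulVec_eq_zero_iff.mp ⟨y, hyne, hNy⟩)
    refine ⟨ξ/γ, ?_⟩
    funext i
    have := congrFun hy0 i
    simp only [hy, Pi.zero_apply] at this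
    simp only [Pi.smul_apply, smul_eq_mul]
    linarith
  · -- future columns
    intro m hm hexi
    rw [hBc' m]
    obtain ⟨i, hiA', hBim⟩ := hexi
    by_cases hBmℓ : B m ℓ = 0
    · rw [hBmℓ]
      have hiA : i ∈ A := by
        rcases Finset.mem_insert.mp hiA' with h | h
        · exfalso
          subst h
          rw [← hsym.apply i m] at hBim
          exact hBim hBmℓ
        · exact h
      have hmA : m ∉ A := fun h => hm (Finset.mem_insert_of_mem h)
      have := hfut m hmA ⟨i, hiA, hBim⟩
      simpa using this
    · exact hγm m hm hBmℓ

lemma good_singleton (B : Matrix (Fin n) (Fin n) ℝ) (hsym : B.IsSymm) (v : Fin n) :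
    Good B {v} := by
  refine ⟨fun i => if i = v then 1 else 0, ?_, ?_, ?_, ?_⟩
  · intro i hi; simp only [Finset.mem_singleton] at hi; simp [hi]
  · simp
  · intro x hx _
    refine ⟨x v, ?_⟩
    funext i
    by_cases h : i = v
    · subst h; simp
    · have := hx i (by simpa using h)
      simp [this, h]
  · intro m hm ⟨i, hi, hBi⟩
    simp only [Finset.mem_singleton] at hi hm
    rw [hi] at hBi
    have : (B *ᵥ fun i => if i = v then (1:ℝ) else 0) m = B m v := by
      simp [Matrix.mulVec, dotProduct]
    rw [this, ← hsym.apply m v]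
    exact hBi

/-- Frontier: a connected graph whose edges are where `B` is nonzero lets us grow `A`. -/
lemma exists_frontier (B : Matrix (Fin n) (Fin n) ℝ) (G : SimpleGraph (Fin n))
    (hconn : G.Connected)
    (hfit : ∀ i k : Fin n, i ≠ k → (B i k ≠ 0 ↔ G.Adj i k))
    (A : Finset (Fin n)) (hA : A.Nonempty) (hAne : A ≠ Finset.univ) :
    ∃ ℓ, ℓ ∉ A ∧ ∃ i ∈ A, B i ℓ ≠ 0 := by
  obtain ⟨a, ha⟩ := hA
  have : ∃ b, b ∉ A := by
    by_contra h
    push_neg at h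
    exact hAne (Finset.eq_univ_iff_forall.2 h)
  obtain ⟨b, hb⟩ := this
  obtain ⟨w⟩ := hconn.preconnected a b
  obtain ⟨d, _, hd1, hd2⟩ := w.exists_boundary_dart (↑A : Set (Fin n))
    (by simpa using ha) (by simpa using hb)
  refine ⟨d.toProd.2, by simpa using hd2, d.toProd.1, by simpa using hd1, ?_⟩
  have hadj : G.Adj d.toProd.1 d.toProd.2 := d.adj
  exact (hfit _ _ hadj.ne).2 hadj


lemma good_grow (B : Matrix (Fin n) (Fin n) ℝ) (hsym : B.IsSymm)
    (G : SimpleGraph (Fin n)) (hconn : G.Connected)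
    (hfit : ∀ i k : Fin n, i ≠ k → (B i k ≠ 0 ↔ G.Adj i k)) :
    ∀ (k : ℕ) (A : Finset (Fin n)), A.Nonempty → Good B A → n ≤ A.card + k →
      Good B Finset.univ := by
  intro k
  induction k with
  | zero =>
    intro A hAne hgood hcard
    have : A = Finset.univ := by
      apply Finset.eq_univ_of_card
      have h1 : A.card ≤ Fintype.card (Fin n) := A.card_le_univ
      simp only [Fintype.card_fin] at h1
      simp only [Nat.add_zero] at hcard
      simp [Fintype.card_fin]
      omega
    exact this ▸ hgood
  | succ k ih =>
    intro A hAne hgood hcard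
    by_cases hA : A = Finset.univ
    · exact hA ▸ hgood
    · obtain ⟨ℓ, hℓ, hedge⟩ := exists_frontier B G hconn hfit A hAne hA
      refine ih (insert ℓ A) (Finset.insert_nonempty ℓ A)
        (good_insert B hsym A hgood ℓ hℓ hedge) ?_
      rw [Finset.card_insert_of_notMem hℓ]
      omega

lemma good_univ (B : Matrix (Fin n) (Fin n) ℝ) (hsym : B.IsSymm)
    (G : SimpleGraph (Fin n)) (hconn : G.Connected)
    (hfit : ∀ i k : Fin n, i ≠ k → (B i k ≠ 0 ↔ G.Adj i k)) (hn : 0 < n) :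
    Good B Finset.univ := by
  have v0 : Fin n := ⟨0, hn⟩
  refine good_grow B hsym G hconn hfit n {v0} ⟨v0, Finset.mem_singleton_self v0⟩
    (good_singleton B hsym v0) ?_
  simp

lemma exists_solution (B : Matrix (Fin n) (Fin n) ℝ) (hsym : B.IsSymm)
    (hgood : Good B Finset.univ) (hn : 0 < n)
    (p : Fin n → ℝ) (hp : ∑ i, p i = 0) :
    ∃ c x : Fin n → ℝ, ∀ i, Mc B c x i = p i := by
  obtain ⟨c, _, hsum, hker, _⟩ := hgood
  have hkerU : ∀ x : Fin n → ℝ, (∀ i ∈ Finset.univ, Mc B c x i = 0) → ∃ t : ℝ, x = t • c :=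
    fun x hx => hker x (fun i hi => absurd (Finset.mem_univ i) hi) hx
  -- the linear map L x = Mc B c x + ⟨c,x⟩ 1
  set L : (Fin n → ℝ) →ₗ[ℝ] (Fin n → ℝ) :=
    { toFun := fun x => fun i => Mc B c x i + (∑ j, c j * x j)
      map_add' := by
        intro x z
        funext i
        simp only [Mc, Matrix.mulVec_add, Pi.add_apply]
        rw [Finset.sum_congr rfl (fun j _ => by ring : ∀ j ∈ Finset.univ,
          c j * (x j + z j) = c j * x j + c j * z j)]
        rw [Finset.sum_add_distrib]
        ring
      map_smul' := by
        intro t x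
        funext i
        simp only [Mc, Matrix.mulVec_smul, Pi.smul_apply, smul_eq_mul, RingHom.id_apply]
        rw [Finset.sum_congr rfl (fun j _ => by ring : ∀ j ∈ Finset.univ,
          c j * (t * x j) = t * (c j * x j))]
        rw [← Finset.mul_sum]
        ring } with hL
  have hLsum : ∀ x : Fin n → ℝ, ∑ i, L x i = (n : ℝ) * (∑ j, c j * x j) := by
    intro x
    simp only [hL, LinearMap.coe_mk, AddHom.coe_mk]
    rw [Finset.sum_add_distrib, sum_Mc B hsym c x, zero_add, Finset.sum_const]
    simp [Finset.card_univ, mul_comm]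
  have hinj : Function.Injective L := by
    rw [← LinearMap.ker_eq_bot, LinearMap.ker_eq_bot']
    intro x hx
    have hx' : ∀ i, Mc B c x i + (∑ j, c j * x j) = 0 := fun i => congrFun hx i
    have hcx : ∑ j, c j * x j = 0 := by
      have h1 : ∑ i, L x i = 0 := by
        rw [show L x = 0 from hx]; simp
      rw [hLsum x] at h1
      rcases mul_eq_zero.mp h1 with h | h
      · exfalso
        have : (n : ℝ) ≠ 0 := Nat.cast_ne_zero.mpr hn.ne'
        exact this h
      · exact h
    have hMc0 : ∀ i ∈ Finset.univ, Mc B c x i = 0 := by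
      intro i _
      have := hx' i
      rw [hcx] at this
      linarith
    obtain ⟨t, ht⟩ := hkerU x hMc0
    have : ∑ j, c j * x j = t * ∑ j, c j * c j := by
      rw [ht, Finset.mul_sum]
      exact Finset.sum_congr rfl fun j _ => by simp [Pi.smul_apply]; ring
    rw [hcx] at this
    have hcc : ∑ j, c j * c j ≠ 0 := by
      intro h
      apply hsum
      have hz : ∀ j ∈ Finset.univ, c j = 0 := by
        intro j _
        have hnn : ∀ j ∈ Finset.univ, 0 ≤ c j * c j := fun j _ => mul_self_nonneg (c j)
        have h2 := (Finset.sum_eq_zero_iff_of_nonneg hnn).mp h j (Finset.mem_univ j)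
        exact mul_self_eq_zero.mp h2
      exact Finset.sum_eq_zero hz
    have ht0 : t = 0 := by
      rcases mul_eq_zero.mp this.symm with h | h
      · exact h
      · exact absurd h hcc
    rw [ht, ht0, zero_smul]
  have hsurj : Function.Surjective L := (LinearMap.injective_iff_surjective).mp hinj
  obtain ⟨x, hx⟩ := hsurj p
  refine ⟨c, x, ?_⟩
  have hcx : ∑ j, c j * x j = 0 := by
    have h1 : ∑ i, L x i = ∑ i, p i := by rw [hx]
    rw [hLsum x, hp] at h1
    rcases mul_eq_zero.mp h1 with h | h
    · exact absurd h (Nat.cast_ne_zero.mpr hn.ne')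
    · exact h
  intro i
  have := congrFun hx i
  simp only [hL, LinearMap.coe_mk, AddHom.coe_mk] at this
  rw [hcx] at this
  linarith

end LosslessAux

open LosslessAux in
/-- For a lossless network (`Y = j·B` with `B` a real symmetric connected
weighted graph Laplacian), the set of achievable real power injection vectors
`p = Re(diag(v v^H Y^H))` over all complex voltages `v` is exactly the hyperplane
`{p : ∑ i, p i = 0}`. -/
theorem lossless_injection_region
    (n : ℕ) (G : SimpleGraph (Fin n)) (hconn : G.Connected)
    (B : Matrix (Fin n) (Fin n) ℝ)
    (hsym : B.IsSymm)
    (hfit : ∀ i k : Fin n, i ≠ k → (B i k ≠ 0 ↔ G.Adj i k))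
    (hrow : B *ᵥ (fun _ => (1 : ℝ)) = 0)
    (Y : Matrix (Fin n) (Fin n) ℂ)
    (hY : Y = fun i k => Complex.I * (B i k : ℂ)) :
    {p : Fin n → ℝ | ∃ v : Fin n → ℂ, p = powerInjection Y v}
      = {p : Fin n → ℝ | ∑ i, p i = 0} := by
  ext p
  simp only [Set.mem_setOf_eq]
  constructor
  · rintro ⟨v, rfl⟩
    have key : ∀ i, powerInjection Y v i
        = (-Complex.I * ∑ k, (B i k : ℂ) * (v i * (starRingEnd ℂ) (v k))).re := by
      intro i
      unfold powerInjection
      congr 1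
      have hYv : (Y *ᵥ v) i = Complex.I * ∑ k, (B i k : ℂ) * v k := by
        simp only [hY, Matrix.mulVec, dotProduct, Finset.mul_sum]
        exact Finset.sum_congr rfl fun k _ => by ring
      rw [hYv, _root_.map_mul, Complex.conj_I,
        map_sum (starRingEnd ℂ) (fun k => (B i k : ℂ) * v k) Finset.univ]
      rw [Finset.mul_sum, Finset.mul_sum, Finset.mul_sum]
      refine Finset.sum_congr rfl fun k _ => ?_
      rw [_root_.map_mul, Complex.conj_ofReal]
      ring
    rw [Finset.sum_congr rfl fun i (_ : i ∈ Finset.univ) => key i]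
    rw [← Complex.re_sum, ← Finset.mul_sum]
    set T : ℂ := ∑ i, ∑ k, (B i k : ℂ) * (v i * (starRingEnd ℂ) (v k)) with hT
    have hTconj : (starRingEnd ℂ) T = T := by
      rw [hT, map_sum]
      rw [Finset.sum_comm (f := fun i k => (B i k : ℂ) * (v i * (starRingEnd ℂ) (v k)))]
      refine Finset.sum_congr rfl fun k _ => ?_
      rw [map_sum]
      refine Finset.sum_congr rfl fun i _ => ?_
      rw [_root_.map_mul, _root_.map_mul, Complex.conj_ofReal, Complex.conj_conj]
      rw [hsym.apply k i]
      ring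
    have hTim : T.im = 0 := Complex.conj_eq_iff_im.mp hTconj
    simp [Complex.mul_re, Complex.neg_re, Complex.neg_im, Complex.I_re, Complex.I_im, hTim]
  · intro hp
    rcases Nat.eq_zero_or_pos n with hn | hn
    · subst hn
      refine ⟨fun _ => 0, ?_⟩
      funext i
      exact i.elim0
    · obtain ⟨c, x, hcx⟩ := exists_solution B hsym
        (good_univ B hsym G hconn hfit hn) hn p hp
      refine ⟨fun j => (x j : ℂ) + Complex.I * (c j : ℂ), ?_⟩
      funext i
      rw [← hcx i]
      have hYv : (Y *ᵥ fun j => (x j : ℂ) + Complex.I * (c j : ℂ)) i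
          = Complex.I * ((B *ᵥ x) i : ℂ) - ((B *ᵥ c) i : ℂ) := by
        simp only [hY, Matrix.mulVec, dotProduct]
        have step : ∀ k : Fin n, (Complex.I * (B i k : ℂ)) * ((x k : ℂ) + Complex.I * (c k : ℂ))
            = Complex.I * ((B i k : ℂ) * (x k : ℂ)) - ((B i k : ℂ) * (c k : ℂ)) := by
          intro k
          linear_combination ((B i k : ℂ) * (c k : ℂ)) * Complex.I_mul_I
        have e1 : (((B *ᵥ x) i : ℝ) : ℂ) = ∑ k, (B i k : ℂ) * (x k : ℂ) := by
          simp [Matrix.mulVec, dotProduct]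
        have e2 : (((B *ᵥ c) i : ℝ) : ℂ) = ∑ k, (B i k : ℂ) * (c k : ℂ) := by
          simp [Matrix.mulVec, dotProduct]
        rw [Finset.sum_congr rfl fun k _ => step k, Finset.sum_sub_distrib, ← Finset.mul_sum,
          ← e1, ← e2]
        rfl
      show Mc B c x i = (_ * (starRingEnd ℂ) _).re
      rw [hYv]
      rw [map_sub, _root_.map_mul, Complex.conj_I, Complex.conj_ofReal, Complex.conj_ofReal]
      simp [Mc, Complex.mul_re, Complex.add_re, Complex.add_im, Complex.sub_re,
        Complex.sub_im, Complex.mul_im]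
      ring
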